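/- Let K be a field and a(T), b(T) ∈ K[T₁,T₂] homogeneous with gcd(a,b)=1. Then gcd(a·T₁, b²·T₁ − a²·T₂) divides T₁ in K[T₁,T₂]. -/

import Mathlib

open MvPolynomial

/-- If `a, b ∈ K[T₁,T₂]` are homogeneous with no common factor, then
`gcd(aT₁, b²T₁ − a²T₂)` divides `T₁`: every common divisor of `aT₁` and
`b²T₁ − a²T₂` divides `T₁`. -/
theorem stmt_7 (K : Type*) [Field K] (da db : ℕ) (a b : MvPolynomial (Fin 2) K)
    (ha : a.IsHomogeneous da) (hb : b.IsHomogeneous db) (hab : IsRelPrime a b) :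
    ∀ g : MvPolynomial (Fin 2) K, g ∣ a * X 0 →
      g ∣ b ^ 2 * X 0 - a ^ 2 * X 1 → g ∣ X 0 := by
  intro g hg1 hg2
  have hpX : Prime (X 0 : MvPolynomial (Fin 2) K) := by
    rw [← MulEquiv.prime_iff (finSuccEquiv K 1)]
    simpa [finSuccEquiv_X_zero] using Polynomial.prime_X (R := MvPolynomial (Fin 1) K)
  obtain ⟨g₁, g₂, hg₁a, hg₂X, rfl⟩ := exists_dvd_and_dvd_of_dvd_mul hg1
  by_cases hu : IsUnit g₁
  · rw [mul_comm]
    exact (hu.mul_right_dvd).2 hg₂X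
  · -- g₁ divides b² X₀
    have hdiff : g₁ ∣ b ^ 2 * X 0 - a ^ 2 * X 1 := (dvd_mul_right g₁ g₂).trans hg2
    have haX : g₁ ∣ a ^ 2 * X 1 := by
      exact Dvd.dvd.mul_right (hg₁a.trans (dvd_pow_self a two_ne_zero)) _
    have h3 : g₁ ∣ b ^ 2 * X 0 := by
      have := dvd_add hdiff haX
      simpa using this
    obtain ⟨c, d, hcb, hdX, hcd⟩ := exists_dvd_and_dvd_of_dvd_mul h3
    have hca : c ∣ a := (hcd ▸ dvd_mul_right c d).trans hg₁a
    have hcunit : IsUnit c := (hab.pow_right) hca hcb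
    have hdnu : ¬ IsUnit d := fun hd => hu (hcd ▸ hcunit.mul hd)
    -- d is a nonunit divisor of the irreducible X 0, so X 0 ∣ d
    obtain ⟨e, he⟩ := hdX
    have heu : IsUnit e := (hpX.irreducible.isUnit_or_isUnit he).resolve_left hdnu
    have hXd : (X 0 : MvPolynomial (Fin 2) K) ∣ d := by
      obtain ⟨u, rfl⟩ := heu
      exact ⟨(u⁻¹ : _ˣ), by rw [he, mul_assoc]; simp⟩
    have hXa : (X 0 : MvPolynomial (Fin 2) K) ∣ a := (hXd.trans (hcd ▸ dvd_mul_left d c)).trans hg₁a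
    by_cases hu2 : IsUnit g₂
    · -- g = g₁ * g₂ with g₁ = c * d, c unit, g₂ unit, d ∣ X 0
      have : g₁ * g₂ ∣ d := by
        rw [hcd]
        exact (hu2.mul_right_dvd).2 ((mul_comm c d) ▸ (hcunit.mul_right_dvd).2 dvd_rfl)
      exact this.trans ⟨e, he⟩
    · -- g₂ nonunit divisor of X 0, so X 0 ∣ g₂, hence X₀² ∣ g, contradiction
      exfalso
      obtain ⟨e₂, he₂⟩ := hg₂X
      have he₂u : IsUnit e₂ := (hpX.irreducible.isUnit_or_isUnit he₂).resolve_left hu2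
      have hXg₂ : (X 0 : MvPolynomial (Fin 2) K) ∣ g₂ := by
        obtain ⟨u, rfl⟩ := he₂u
        exact ⟨(u⁻¹ : _ˣ), by rw [he₂, mul_assoc]; simp⟩
      have hX2 : (X 0 : MvPolynomial (Fin 2) K) ^ 2 ∣ b ^ 2 * X 0 - a ^ 2 * X 1 := by
        have : (X 0 : MvPolynomial (Fin 2) K) ^ 2 ∣ g₁ * g₂ := by
          rw [sq]
          exact mul_dvd_mul (hXd.trans (hcd ▸ dvd_mul_left d c)) hXg₂
        exact this.trans hg2
      have hX2a : (X 0 : MvPolynomial (Fin 2) K) ^ 2 ∣ a ^ 2 * X 1 :=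
        (pow_dvd_pow_of_dvd hXa 2).mul_right _
      have hX2b : (X 0 : MvPolynomial (Fin 2) K) ^ 2 ∣ b ^ 2 * X 0 := by
        have := dvd_add hX2 hX2a
        simpa using this
      have hXb2 : (X 0 : MvPolynomial (Fin 2) K) ∣ b ^ 2 := by
        have hX0 : (X 0 : MvPolynomial (Fin 2) K) ≠ 0 := hpX.ne_zero
        rw [sq] at hX2b
        obtain ⟨k, hk⟩ := hX2b
        refine ⟨k, ?_⟩
        have : b ^ 2 * X 0 = X 0 * k * X 0 := by rw [hk]; ring
        exact mul_right_cancel₀ hX0 (by linear_combination this)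
      have hXb : (X 0 : MvPolynomial (Fin 2) K) ∣ b := hpX.dvd_of_dvd_pow hXb2
      exact hpX.not_unit (hab hXa hXb)
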